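/- arXiv:1406.2145 — 6 statements merged into one kernel-verified Lean document; each statement's English description precedes it below -/
import Mathlib

section
/- For every prime ideal p of A, the set p′^f := {(p, f(p) + j) | p ∈ p, j ∈ J} is a prime ideal of A ⋈^f J. -/
set_option synthInstance.maxHeartbeats 1000000
set_option maxHeartbeats 1000000
/-- The amalgamation `A ⋈^f J` of `A` with `B` along `J` with respect to `f`,
as a subring of `A × B`. -/
def Amalg {A B : Type*} [CommRing A] [CommRing B] (f : A →+* B) (J : Ideal B) :
    Subring (A × B) where
  carrier := {p | ∃ a : A, ∃ j ∈ J, p = (a, f a + j)}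
  zero_mem' := ⟨0, 0, J.zero_mem, by ext <;> simp⟩
  one_mem' := ⟨1, 0, J.zero_mem, by ext <;> simp⟩
  add_mem' := by
    rintro _ _ ⟨a, j, hj, rfl⟩ ⟨a', j', hj', rfl⟩
    exact ⟨a + a', j + j', J.add_mem hj hj', by simp [Prod.ext_iff]; ring⟩
  neg_mem' := by
    rintro _ ⟨a, j, hj, rfl⟩
    exact ⟨-a, -j, J.neg_mem hj, by simp [Prod.ext_iff]; ring⟩
  mul_mem' := by
    rintro _ _ ⟨a, j, hj, rfl⟩ ⟨a', j', hj', rfl⟩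
    refine ⟨a * a', f a * j' + f a' * j + j * j',
      J.add_mem (J.add_mem (J.mul_mem_left _ hj') (J.mul_mem_left _ hj))
        (J.mul_mem_left _ hj'), by simp [Prod.ext_iff]; ring⟩

/-- For every prime ideal `p` of `A`, the set `p′^f = {(p, f(p)+j) | p ∈ p, j ∈ J}`
is a prime ideal of `A ⋈^f J`. -/
theorem amalgamation_prime_of_prime_A {A B : Type*} [CommRing A] [CommRing B]
    (f : A →+* B) (J : Ideal B) (p : Ideal A) (hp : p.IsPrime) :
    ∃ P : Ideal (Amalg f J),
      (P : Set (Amalg f J)) =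
        {x : Amalg f J | ∃ a ∈ p, ∃ j ∈ J, (x : A × B) = (a, f a + j)} ∧
      P.IsPrime := by
  let π : Amalg f J →+* A := (RingHom.fst A B).comp (Amalg f J).subtype
  refine ⟨p.comap π, ?_, Ideal.IsPrime.comap π⟩
  ext x
  simp only [SetLike.mem_coe, Ideal.mem_comap, Set.mem_setOf_eq]
  constructor
  · intro hx
    obtain ⟨a, j, hj, hx'⟩ := x.2
    refine ⟨a, ?_, j, hj, hx'⟩
    have : π x = a := by simp [π, hx']
    rwa [this] at hx
  · rintro ⟨a, ha, j, hj, hx'⟩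
    have : π x = a := by simp [π, hx']
    rwa [this]
end

section
/- Every prime ideal of A ⋈^f J is of the form q̄^f for some prime ideal q of B with J ⊄ q, or of the form p′^f for some prime ideal p of A, where q̄^f := {(a, f(a)+j) | a ∈ A, j ∈ J, f(a)+j ∈ q} and p′^f := {(p, f(p)+j) | p ∈ p, j ∈ J}. -/
set_option synthInstance.maxHeartbeats 1000000
set_option maxHeartbeats 1000000
namespace AmalgAux

variable {A B : Type*} [CommRing A] [CommRing B] (f : A →+* B) (J : Ideal B)

def zJ (j : B) (hj : j ∈ J) : Amalg f J := ⟨(0, j), 0, j, hj, by simp⟩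

@[simp] lemma zJ_coe (j : B) (hj : j ∈ J) : (zJ f J j hj : A × B) = (0, j) := rfl

lemma zJ_congr {j j' : B} (hj : j ∈ J) (hj' : j' ∈ J) (h : j = j') :
    zJ f J j hj = zJ f J j' hj' := by subst h; rfl

lemma zJ_mul (j j' : B) (hj : j ∈ J) (hj' : j' ∈ J) :
    zJ f J j hj * zJ f J j' hj' = zJ f J (j * j') (J.mul_mem_left _ hj') := by
  apply Subtype.ext; simp [zJ, Prod.ext_iff]

lemma mul_zJ (x : Amalg f J) (j : B) (hj : j ∈ J) :
    x * zJ f J j hj = zJ f J ((x : A × B).2 * j) (J.mul_mem_left _ hj) := by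
  apply Subtype.ext; simp [zJ, Prod.ext_iff]

def eA : A →+* Amalg f J where
  toFun a := ⟨(a, f a), a, 0, J.zero_mem, by simp⟩
  map_one' := by apply Subtype.ext; simp
  map_mul' a a' := by apply Subtype.ext; simp
  map_zero' := by apply Subtype.ext; simp
  map_add' a a' := by apply Subtype.ext; simp

@[simp] lemma eA_coe (a : A) : (eA f J a : A × B) = (a, f a) := rfl

end AmalgAux

/-- Every prime ideal of `A ⋈^f J` is of the form `q̄^f` for a prime `q` of `B`
not containing `J`, or of the form `p′^f` for a prime `p` of `A`. -/
theorem amalgamation_primes_classification {A B : Type*} [CommRing A] [CommRing B]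
    (f : A →+* B) (J : Ideal B) (P : Ideal (Amalg f J)) (hP : P.IsPrime) :
    (∃ q : Ideal B, q.IsPrime ∧ ¬ J ≤ q ∧
        (P : Set (Amalg f J)) = {x : Amalg f J | (x : A × B).2 ∈ q}) ∨
    (∃ p : Ideal A, p.IsPrime ∧
        (P : Set (Amalg f J)) =
          {x : Amalg f J | ∃ a ∈ p, ∃ j ∈ J, (x : A × B) = (a, f a + j)}) := by
  classical
  open AmalgAux in
  by_cases hJ0 : ∀ j (hj : j ∈ J), zJ f J j hj ∈ P
  · -- P contains {0} × J : second case
    right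
    refine ⟨P.comap (eA f J), Ideal.IsPrime.comap _, ?_⟩
    ext x
    obtain ⟨a, j, hj, hx⟩ := x.property
    constructor
    · intro hxP
      refine ⟨a, ?_, j, hj, hx⟩
      have : eA f J a = x - zJ f J j hj := by
        apply Subtype.ext; simp [hx, Prod.ext_iff]
      simpa [Ideal.mem_comap, this] using P.sub_mem hxP (hJ0 j hj)
    · rintro ⟨a', ha', j', hj', hx'⟩
      have : x = eA f J a' + zJ f J j' hj' := by
        apply Subtype.ext; simp [hx', Prod.ext_iff]
      rw [this]
      exact P.add_mem ha' (hJ0 j' hj')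
  · -- P does not contain {0} × J : first case
    left
    push_neg at hJ0
    obtain ⟨j₀, hj₀, hj₀P⟩ := hJ0
    refine ⟨{ carrier := {b | ∀ j (hj : j ∈ J), zJ f J (b * j) (J.mul_mem_left b hj) ∈ P}
              zero_mem' := by
                intro j hj
                have : zJ f J ((0:B) * j) (J.mul_mem_left 0 hj) = 0 := by
                  apply Subtype.ext; simp
                rw [this]; exact P.zero_mem
              add_mem' := by
                intro b b' hb hb' j hj
                have : zJ f J ((b + b') * j) (J.mul_mem_left _ hj) =
                    zJ f J (b * j) (J.mul_mem_left _ hj) +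
                    zJ f J (b' * j) (J.mul_mem_left _ hj) := by
                  apply Subtype.ext; simp [zJ, Prod.ext_iff]; ring
                rw [this]; exact P.add_mem (hb j hj) (hb' j hj)
              smul_mem' := by
                intro c b hb j hj
                have h := hb (c * j) (J.mul_mem_left c hj)
                have heq : zJ f J (c • b * j) (J.mul_mem_left _ hj) =
                    zJ f J (b * (c * j)) (J.mul_mem_left _ (J.mul_mem_left c hj)) := by
                  apply zJ_congr; simp [smul_eq_mul]; ring
                rw [heq]; exact h }, ?_, ?_, ?_⟩
    · constructor
      · intro htop
        apply hj₀P
        have h1 : (1 : B) ∈ (⊤ : Ideal B) := trivial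
        rw [← htop] at h1
        have := h1 j₀ hj₀
        have heq : zJ f J ((1:B) * j₀) (J.mul_mem_left 1 hj₀) = zJ f J j₀ hj₀ := by
          apply zJ_congr; ring
        rwa [heq] at this
      · intro b b' hbb'
        by_contra hcon
        push_neg at hcon
        obtain ⟨hb, hb'⟩ := hcon
        simp only [Submodule.mem_mk, AddSubmonoid.mem_mk,
          AddSubsemigroup.mem_mk, Set.mem_setOf_eq, not_forall] at hb hb'
        obtain ⟨j, hj, hjP⟩ := hb
        obtain ⟨j', hj', hj'P⟩ := hb'
        have h := hbb' (j * j') (J.mul_mem_left j hj')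
        have heq : zJ f J (b * b' * (j * j')) (J.mul_mem_left _ (J.mul_mem_left j hj')) =
            zJ f J (b * j) (J.mul_mem_left _ hj) *
            zJ f J (b' * j') (J.mul_mem_left _ hj') := by
          rw [zJ_mul]; apply zJ_congr; ring
        rw [heq] at h
        rcases hP.mem_or_mem h with h1 | h1
        · exact hjP h1
        · exact hj'P h1
    · intro hJq
      have := hJq hj₀ j₀ hj₀
      have heq : zJ f J (j₀ * j₀) (J.mul_mem_left _ hj₀) =
          zJ f J j₀ hj₀ * zJ f J j₀ hj₀ := by rw [zJ_mul]
      rw [heq] at this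
      rcases hP.mem_or_mem this with h1 | h1 <;> exact hj₀P h1
    · ext x
      constructor
      · intro hxP
        intro j hj
        have := P.mul_mem_right (AmalgAux.zJ f J j hj) hxP
        rwa [mul_zJ] at this
      · intro hxq
        have h := hxq j₀ hj₀
        rw [← AmalgAux.mul_zJ f J x j₀ hj₀] at h
        rcases hP.mem_or_mem h with h1 | h1
        · exact h1
        · exact absurd h1 hj₀P
end

section
/- The ring A ⋈^f J is local if and only if A is local and J is contained in the Jacobson radical of B. -/
set_option synthInstance.maxHeartbeats 1000000
set_option maxHeartbeats 1000000
set_option linter.unnecessarySimpa false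

lemma Amalg.isUnit_of {A B : Type*} [CommRing A] [CommRing B] {f : A →+* B} {J : Ideal B}
    {x : Amalg f J} (h1 : IsUnit (x : A × B).1) (h2 : IsUnit (x : A × B).2) :
    IsUnit x := by
  obtain ⟨a, j, hj, hx⟩ := x.2
  obtain ⟨a', ha'⟩ := h1.exists_right_inv
  obtain ⟨b', hb'⟩ := h2.exists_right_inv
  have hx1 : (x : A × B).1 = a := by rw [hx]
  have hx2 : (x : A × B).2 = f a + j := by rw [hx]
  rw [hx1] at ha'; rw [hx2] at hb'
  have hfa : f a * f a' = 1 := by rw [← map_mul, ha', map_one]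
  have hmem : ((a', b') : A × B) ∈ Amalg f J := by
    refine ⟨a', b' - f a', ?_, by simp⟩
    have key : b' - f a' = -(f a' * b') * j := by
      linear_combination (-b') * hfa + (f a') * hb'
    rw [key]; exact J.mul_mem_left _ hj
  refine isUnit_iff_exists.mpr ⟨⟨(a', b'), hmem⟩, ?_, ?_⟩
  · exact Subtype.ext (show (x : A × B) * (a', b') = 1 by
      rw [hx]; exact Prod.ext ha' hb')
  · exact Subtype.ext (show ((a', b') : A × B) * (x : A × B) = 1 by
      rw [hx]; exact Prod.ext (by rw [mul_comm] at ha'; exact ha')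
        (by rw [mul_comm] at hb'; exact hb'))

/-- `A ⋈^f J` is local iff `A` is local and `J` is contained in the Jacobson
radical of `B`. -/
theorem amalgamation_isLocalRing_iff {A B : Type*} [CommRing A] [CommRing B]
    (f : A →+* B) (J : Ideal B) :
    IsLocalRing (Amalg f J) ↔ IsLocalRing A ∧ J ≤ (⊥ : Ideal B).jacobson := by
  constructor
  · intro hR
    have hπ : Function.Surjective ((RingHom.fst A B).comp (Amalg f J).subtype) := by
      intro a; exact ⟨⟨(a, f a), a, 0, J.zero_mem, by simp⟩, rfl⟩
    have hA10 : (1 : A) ≠ 0 := by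
      intro h
      have hB : (1 : B) = 0 := by rw [← f.map_one, h, f.map_zero]
      exact one_ne_zero (α := Amalg f J) (Subtype.ext (Prod.ext h hB))
    have : Nontrivial A := ⟨1, 0, hA10⟩
    refine ⟨IsLocalRing.of_surjective' _ hπ, ?_⟩
    intro j hj
    rw [Ideal.mem_jacobson_bot]
    intro y
    have hmem : ((0, -(j * y)) : A × B) ∈ Amalg f J :=
      ⟨0, -(j * y), J.neg_mem (J.mul_mem_right _ hj), by simp⟩
    rcases IsLocalRing.isUnit_or_isUnit_one_sub_self
        (⟨(0, -(j * y)), hmem⟩ : Amalg f J) with h | h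
    · exfalso
      have h0 : IsUnit (0 : A) := by
        have := h.map ((RingHom.fst A B).comp (Amalg f J).subtype)
        simpa using this
      exact hA10 (isUnit_zero_iff.mp h0).symm
    · have hu := h.map ((RingHom.snd A B).comp (Amalg f J).subtype)
      have : ((RingHom.snd A B).comp (Amalg f J).subtype)
          (1 - ⟨(0, -(j * y)), hmem⟩) = j * y + 1 := by
        simp; ring
      rwa [this] at hu
  · rintro ⟨hA, hJ⟩
    have : Nontrivial (Amalg f J) := by
      refine ⟨1, 0, fun h => ?_⟩
      have : (1 : A) = 0 := congrArg (fun z : Amalg f J => (z : A × B).1) h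
      exact one_ne_zero this
    apply IsLocalRing.of_isUnit_or_isUnit_one_sub_self
    intro x
    obtain ⟨a, j, hj, hx⟩ := x.2
    have hx1 : (x : A × B).1 = a := by rw [hx]
    have hx2 : (x : A × B).2 = f a + j := by rw [hx]
    have hunit : ∀ (b : A) (k : B), k ∈ J → IsUnit b → IsUnit (f b + k) := by
      intro b k hk hb
      obtain ⟨b', hb'⟩ := hb.exists_right_inv
      have hfb : f b * f b' = 1 := by rw [← map_mul, hb', map_one]
      have h1 : IsUnit (k * f b' + 1) := Ideal.mem_jacobson_bot.mp (hJ hk) (f b')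
      have : f b + k = f b * (k * f b' + 1) := by linear_combination (-k) * hfb
      rw [this]
      exact (isUnit_iff_exists.mpr ⟨f b', hfb, by rw [mul_comm]; exact hfb⟩).mul h1
    rcases IsLocalRing.isUnit_or_isUnit_one_sub_self a with h | h
    · exact Or.inl (Amalg.isUnit_of (by rw [hx1]; exact h)
        (by rw [hx2]; exact hunit a j hj h))
    · refine Or.inr (Amalg.isUnit_of ?_ ?_)
      · simpa [hx] using h
      · have hu := hunit (1 - a) (-j) (J.neg_mem hj) h
        have he : f (1 - a) + -j = 1 - (f a + j) := by
          rw [map_sub, map_one]; ring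
        rw [he] at hu
        simpa [hx] using hu
end

section
/- For a prime ideal p of A not containing f⁻¹(J), the localization of A ⋈^f J at the prime p′^f := {(p, f(p)+j) | p ∈ p, j ∈ J} is isomorphic as a ring to the localization A_p. -/
set_option synthInstance.maxHeartbeats 1000000
set_option maxHeartbeats 1000000
/-- For a prime `p` of `A` not containing `f⁻¹(J)`, the localization of `A ⋈^f J`
at `p′^f = {(p, f(p)+j) | p ∈ p, j ∈ J}` is isomorphic to `A_p`. -/
theorem amalgamation_localization_at_pprime {A B : Type*} [CommRing A] [CommRing B]
    (f : A →+* B) (J : Ideal B) (p : Ideal A) [hp : p.IsPrime]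
    (hJp : ¬ J.comap f ≤ p)
    (P : Ideal (Amalg f J)) [hP : P.IsPrime]
    (hP2 : (P : Set (Amalg f J)) =
      {x : Amalg f J | ∃ a ∈ p, ∃ j ∈ J, (x : A × B) = (a, f a + j)}) :
    Nonempty (Localization.AtPrime P ≃+* Localization.AtPrime p) := by
  classical
  obtain ⟨a0, ha0J, ha0p⟩ := SetLike.not_le_iff_exists.mp hJp
  set π : Amalg f J →+* A := (RingHom.fst A B).comp (Amalg f J).subtype with hπ
  have memP : ∀ x : Amalg f J, x ∈ P ↔ (x : A × B).1 ∈ p := by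
    intro x
    constructor
    · intro hx
      have hx' : x ∈ (P : Set (Amalg f J)) := hx
      rw [hP2] at hx'
      obtain ⟨a, ha, j, hj, hxv⟩ := hx'
      rw [hxv]; exact ha
    · intro hx
      obtain ⟨a, j, hj, hxv⟩ := x.2
      have h1 : (x : A × B).1 = a := by rw [hxv]
      have : x ∈ (P : Set (Amalg f J)) := by
        rw [hP2]; exact ⟨a, h1 ▸ hx, j, hj, hxv⟩
      exact this
  letI alg : Algebra (Amalg f J) (Localization.AtPrime p) :=
    ((algebraMap A (Localization.AtPrime p)).comp π).toAlgebra
  have halg : ∀ x : Amalg f J, algebraMap (Amalg f J) (Localization.AtPrime p) x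
      = algebraMap A (Localization.AtPrime p) (x : A × B).1 := fun _ => rfl
  haveI : IsLocalization P.primeCompl (Localization.AtPrime p) := by
    constructor
    constructor
    · rintro ⟨x, hx⟩
      have h1 : (x : A × B).1 ∈ p.primeCompl := fun h => hx ((memP x).mpr h)
      have := IsLocalization.map_units (M := p.primeCompl) (Localization.AtPrime p) ⟨_, h1⟩
      simpa [halg] using this
    · intro z
      obtain ⟨⟨a, s⟩, hz⟩ := IsLocalization.surj p.primeCompl z
      have hsP : (⟨((s : A), f s), s, 0, J.zero_mem, by simp⟩ : Amalg f J) ∈ P.primeCompl := by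
        intro h
        exact s.2 ((memP _).mp h)
      refine ⟨⟨⟨(a, f a), a, 0, J.zero_mem, by simp⟩, ⟨_, hsP⟩⟩, ?_⟩
      simpa [halg] using hz
    · intro x y h
      rw [halg, halg] at h
      obtain ⟨c, hc⟩ := IsLocalization.exists_of_eq (M := p.primeCompl) h
      have hmem : -(f ((c : A) * a0)) ∈ J := by
        have : f a0 ∈ J := ha0J
        simpa [map_mul] using J.neg_mem (J.mul_mem_left (f (c : A)) this)
      have hnp : (c : A) * a0 ∉ p := fun hm => by
        rcases hp.mem_or_mem hm with h1 | h1
        · exact c.2 h1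
        · exact ha0p h1
      have hsP : (⟨((c : A) * a0, 0), (c : A) * a0, -(f ((c : A) * a0)), hmem, by simp⟩ :
          Amalg f J) ∈ P.primeCompl := fun h => hnp ((memP _).mp h)
      refine ⟨⟨_, hsP⟩, ?_⟩
      apply Subtype.ext
      have hx2 : ((c : A) * a0) * (x : A × B).1 = ((c : A) * a0) * (y : A × B).1 := by
        linear_combination a0 * hc
      show (((c : A) * a0, (0:B)) * (x : A × B)) = (((c : A) * a0, (0:B)) * (y : A × B))
      simp [Prod.ext_iff, hx2]
  exact ⟨(IsLocalization.algEquiv P.primeCompl (Localization.AtPrime P)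
    (Localization.AtPrime p)).toRingEquiv⟩
end

section
/- If J² = 0, then Hom_{A ⋈^f J}(A, A ⋈^f J) is isomorphic as an A-module to Ann_A(J) ⊕ J, where Ann_A(J) := {a ∈ A | f(a)J = 0}. -/
set_option synthInstance.maxHeartbeats 1000000
set_option maxHeartbeats 1000000
/-- The amalgamation as a subalgebra of `A × B`, when `B` is an `A`-algebra. -/
def AmalgA (A : Type*) {B : Type*} [CommRing A] [CommRing B] [Algebra A B] (J : Ideal B) :
    Subalgebra A (A × B) :=
  { Amalg (algebraMap A B) J with
    algebraMap_mem' := fun a => ⟨a, 0, J.zero_mem, by simp⟩ }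


namespace AmalgHelper

variable {A B : Type*} [CommRing A] [CommRing B] [Algebra A B] (J : Ideal B)

def ann : Ideal A where
  carrier := {a | ∀ x ∈ J, algebraMap A B a * x = 0}
  zero_mem' := fun x _ => by simp
  add_mem' := fun {a b} ha hb x hx => by rw [map_add, add_mul, ha x hx, hb x hx, add_zero]
  smul_mem' := fun c a ha x hx => by rw [smul_eq_mul, map_mul, mul_assoc, ha x hx, mul_zero]

lemma snd_sub_mem (r : AmalgA A J) : r.val.2 - algebraMap A B r.val.1 ∈ J := by
  obtain ⟨a, j, hj, h⟩ := r.2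
  rw [h]; simpa using hj

lemma mk_mem (x : A) {k : B} (hk : k ∈ J) : ((x, algebraMap A B x + k) : A × B) ∈ AmalgA A J :=
  ⟨x, k, hk, rfl⟩

end AmalgHelper


open AmalgHelper in
/-- If `J² = 0`, then `Hom_{A ⋈^f J}(A, A ⋈^f J) ≅ Ann_A(J) ⊕ J` as `A`-modules. -/
theorem amalgamation_hom_iso_ann_oplus_J {A B : Type*} [CommRing A] [CommRing B]
    [Algebra A B] (J : Ideal B) (hJ2 : J * J = ⊥) :
    letI : Module (AmalgA A J) A :=
      Module.compHom A ((RingHom.fst A B).comp (AmalgA A J).subtype)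
    letI : Module A (A →ₗ[AmalgA A J] AmalgA A J) :=
      Module.compHom _ (algebraMap A (AmalgA A J))
    ∃ I : Ideal A,
      (I : Set A) = {a : A | ∀ x ∈ J, algebraMap A B a * x = 0} ∧
      Nonempty ((A →ₗ[AmalgA A J] AmalgA A J) ≃ₗ[A]
        (I × Submodule.restrictScalars A J)) := by
  letI : Module (AmalgA A J) A :=
    Module.compHom A ((RingHom.fst A B).comp (AmalgA A J).subtype)
  letI : Module A (A →ₗ[AmalgA A J] AmalgA A J) :=
    Module.compHom _ (algebraMap A (AmalgA A J))
  have hsmulA : ∀ (r : AmalgA A J) (x : A), r • x = r.val.1 * x := fun r x => rfl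
  have hmulJ : ∀ {j k : B}, j ∈ J → k ∈ J → j * k = 0 := fun {j k} hj hk => by
    have h := Ideal.mul_mem_mul hj hk
    rw [hJ2] at h
    exact (Ideal.mem_bot).1 h
  have hφx : ∀ (φ : A →ₗ[AmalgA A J] AmalgA A J) (x : A),
      (φ x).val = ((x, algebraMap A B x) : A × B) * (φ 1).val := by
    intro φ x
    set rx : AmalgA A J := algebraMap A (AmalgA A J) x with hrx
    have h := φ.map_smul rx 1
    rw [hsmulA rx 1] at h
    have hval : rx.val.1 = x := rfl
    rw [hval, mul_one, smul_eq_mul] at h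
    rw [h]; rfl
  have key : ∀ φ : A →ₗ[AmalgA A J] AmalgA A J, ∀ k ∈ J, k * (φ 1).val.2 = 0 := by
    intro φ k hk
    have hmem : ((0 : A), k) ∈ AmalgA A J := by simpa using mk_mem J (0 : A) hk
    set r : AmalgA A J := ⟨(0, k), hmem⟩ with hr
    have h0 : r • (1 : A) = 0 := by rw [hsmulA]; simp [hr]
    have h1 : r • φ 1 = 0 := by
      rw [← φ.map_smul r 1, h0, φ.map_zero]
    rw [smul_eq_mul] at h1
    have h2 := congrArg (fun s : AmalgA A J => s.val.2) h1
    simpa [hr] using h2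
  have keyAnn : ∀ φ : A →ₗ[AmalgA A J] AmalgA A J, ∀ k ∈ J,
      algebraMap A B (φ 1).val.1 * k = 0 := by
    intro φ k hk
    have h2 := key φ k hk
    have hj := snd_sub_mem J (φ 1)
    have h3 : k * ((φ 1).val.2 - algebraMap A B (φ 1).val.1) = 0 := hmulJ hk hj
    linear_combination h2 - h3
  refine ⟨ann J, rfl, ⟨?_⟩⟩
  refine LinearEquiv.ofLinear
    (M₂ := (ann J) × Submodule.restrictScalars A J)
    { toFun := fun φ => (⟨(φ 1).val.1, fun k hk => keyAnn φ k hk⟩,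
        ⟨(φ 1).val.2 - algebraMap A B (φ 1).val.1, snd_sub_mem J (φ 1)⟩)
      map_add' := fun φ ψ => by
        refine Prod.ext (Subtype.ext ?_) (Subtype.ext ?_)
        · show (φ 1).val.1 + (ψ 1).val.1 = (φ 1).val.1 + (ψ 1).val.1
          rfl
        · show (φ 1).val.2 + (ψ 1).val.2
              - algebraMap A B ((φ 1).val.1 + (ψ 1).val.1)
            = ((φ 1).val.2 - algebraMap A B (φ 1).val.1)
              + ((ψ 1).val.2 - algebraMap A B (ψ 1).val.1)
          rw [map_add]; ring
      map_smul' := fun c φ => by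
        refine Prod.ext (Subtype.ext ?_) (Subtype.ext ?_)
        · show c * (φ 1).val.1 = c * (φ 1).val.1
          rfl
        · show algebraMap A B c * (φ 1).val.2 - algebraMap A B (c * (φ 1).val.1)
            = c • ((φ 1).val.2 - algebraMap A B (φ 1).val.1)
          rw [Algebra.smul_def, map_mul]; ring }
    { toFun := fun p =>
        { toFun := fun x => ⟨(x * p.1.val, algebraMap A B (x * p.1.val)
            + algebraMap A B x * p.2.val),
            mk_mem J _ (J.mul_mem_left _ p.2.property)⟩
          map_add' := fun x y => by
            refine Subtype.ext (Prod.ext ?_ ?_)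
            · show (x + y) * p.1.val = x * p.1.val + y * p.1.val
              ring
            · show algebraMap A B ((x + y) * p.1.val) + algebraMap A B (x + y) * p.2.val
                = (algebraMap A B (x * p.1.val) + algebraMap A B x * p.2.val)
                  + (algebraMap A B (y * p.1.val) + algebraMap A B y * p.2.val)
              simp only [add_mul, map_add]; ring
          map_smul' := fun r x => by
            obtain ⟨⟨a, ha⟩, ⟨j, hj⟩⟩ := p
            have hk := snd_sub_mem J r
            set k := r.val.2 - algebraMap A B r.val.1 with hkdef
            have hr2 : r.val.2 = algebraMap A B r.val.1 + k := by rw [hkdef]; ring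
            have h1 : algebraMap A B a * k = 0 := ha k hk
            have h2 : k * j = 0 := hmulJ hk hj
            refine Subtype.ext (Prod.ext ?_ ?_)
            · show r.val.1 * x * a = r.val.1 * (x * a)
              ring
            · show algebraMap A B (r.val.1 * x * a) + algebraMap A B (r.val.1 * x) * j
                = r.val.2 * (algebraMap A B (x * a) + algebraMap A B x * j)
              simp only [map_mul]
              linear_combination (-(algebraMap A B x)) * h1 - algebraMap A B x * h2
                - (algebraMap A B x * algebraMap A B a + algebraMap A B x * j) * hr2 }
      map_add' := fun p q => by
        refine LinearMap.ext fun x => Subtype.ext (Prod.ext ?_ ?_)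
        · show x * (p.1.val + q.1.val) = x * p.1.val + x * q.1.val
          ring
        · show algebraMap A B (x * (p.1.val + q.1.val))
              + algebraMap A B x * (p.2.val + q.2.val)
            = (algebraMap A B (x * p.1.val) + algebraMap A B x * p.2.val)
              + (algebraMap A B (x * q.1.val) + algebraMap A B x * q.2.val)
          simp only [mul_add, map_add]; ring
      map_smul' := fun c p => by
        refine LinearMap.ext fun x => Subtype.ext (Prod.ext ?_ ?_)
        · show x * (c * p.1.val) = c * (x * p.1.val)
          ring
        · show algebraMap A B (x * (c * p.1.val)) + algebraMap A B x * (c • p.2.val)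
            = algebraMap A B c * (algebraMap A B (x * p.1.val) + algebraMap A B x * p.2.val)
          rw [Algebra.smul_def]
          simp only [map_mul]
          ring }
    ?_ ?_
  · refine LinearMap.ext fun p => Prod.ext (Subtype.ext ?_) (Subtype.ext ?_)
    · show (1 : A) * p.1.val = p.1.val
      ring
    · show algebraMap A B ((1 : A) * p.1.val) + algebraMap A B (1 : A) * p.2.val
        - algebraMap A B ((1 : A) * p.1.val) = p.2.val
      simp
  · refine LinearMap.ext fun φ => LinearMap.ext fun x => Subtype.ext (Prod.ext ?_ ?_)
    · show x * (φ 1).val.1 = (φ x).val.1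
      rw [hφx φ x]
      rfl
    · show algebraMap A B (x * (φ 1).val.1)
        + algebraMap A B x * ((φ 1).val.2 - algebraMap A B (φ 1).val.1) = (φ x).val.2
      rw [hφx φ x]
      show _ = algebraMap A B x * (φ 1).val.2
      rw [map_mul]
      ring
end

section
/- If J² = 0, then for every prime ideal p of A, the localization J_p is isomorphic as an A_p-module to the localization J_{S_p} := S_p⁻¹J, where S_p := f(A \ p) + J is a multiplicative subset of B; the isomorphism sends x/t to x/f(t). -/
set_option synthInstance.maxHeartbeats 1000000
set_option maxHeartbeats 1000000

/-- If `J² = 0` then, for every prime `p` of `A`, `J_p ≅ S_p⁻¹J` as `A`-modules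
(hence as `A_p`-modules), where `S_p = f(A \ p) + J`, via `x/t ↦ x/f(t)`. -/
theorem localization_J_iso_of_sq_zero {A B : Type*} [CommRing A] [CommRing B]
    [Algebra A B] (J : Ideal B) (hJ2 : J * J = ⊥) (p : Ideal A) [hp : p.IsPrime] :
    ∃ S : Submonoid B,
      (S : Set B) = {b : B | ∃ a : A, a ∉ p ∧ ∃ j ∈ J, b = algebraMap A B a + j} ∧
      letI : Module A (LocalizedModule S J) := Module.compHom _ (algebraMap A B)
      ∃ e : LocalizedModule p.primeCompl (Submodule.restrictScalars A J) ≃ₗ[A]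
          LocalizedModule S J,
        ∀ (x : J) (t : p.primeCompl) (s : S), (s : B) = algebraMap A B (t : A) →
          e (LocalizedModule.mk ⟨(x : B), x.2⟩ t) = LocalizedModule.mk x s := by
  classical
  have h1 : (1 : A) ∉ p := fun h => hp.ne_top (Ideal.eq_top_of_isUnit_mem p h isUnit_one)
  -- The multiplicative set S
  let S : Submonoid B :=
  { carrier := {b : B | ∃ a : A, a ∉ p ∧ ∃ j ∈ J, b = algebraMap A B a + j}
    one_mem' := ⟨1, h1, 0, J.zero_mem, by simp⟩
    mul_mem' := by
      rintro x y ⟨a, ha, j, hj, rfl⟩ ⟨a', ha', j', hj', rfl⟩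
      refine ⟨a * a', fun h => (hp.mem_or_mem h).elim ha ha',
        algebraMap A B a * j' + j * algebraMap A B a' + j * j',
        add_mem (add_mem (J.mul_mem_left _ hj') (J.mul_mem_right _ hj))
          (J.mul_mem_right _ hj), by rw [map_mul]; ring⟩ }
  refine ⟨S, rfl, ?_⟩
  letI instM : Module A (LocalizedModule S J) := Module.compHom _ (algebraMap A B)
  letI : SMul A (LocalizedModule S J) := instM.toSMul
  have hsmul : ∀ (a : A) (y : LocalizedModule S J), a • y = algebraMap A B a • y :=
    fun _ _ => rfl
  haveI : @SMulCommClass A A (LocalizedModule S J) instM.toSMul instM.toSMul :=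
    ⟨fun a b y => by rw [hsmul, hsmul, hsmul, hsmul, smul_smul, smul_smul, mul_comm]⟩
  haveI : @IsScalarTower A A (LocalizedModule S J) _ instM.toSMul instM.toSMul :=
    ⟨fun a b y => by rw [smul_eq_mul, hsmul, hsmul, hsmul, map_mul, mul_smul]⟩
  -- key fact : J annihilates J
  have hann : ∀ (j : B), j ∈ J → ∀ m : J, j • m = 0 := by
    intro j hj m
    ext
    have : j * (m : B) ∈ J * J := Ideal.mul_mem_mul hj m.2
    rw [hJ2] at this
    simpa using this
  -- an element of S acts on J like its "A-part"
  have hSact : ∀ (a : A) (j : B) (_ : j ∈ J) (m : J),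
      (algebraMap A B a + j) • m = algebraMap A B a • m := by
    intro a j hj m
    rw [add_smul, hann j hj m, add_zero]
  -- the natural map
  let g : Submodule.restrictScalars A J →ₗ[A] LocalizedModule S J :=
    { toFun := fun x => LocalizedModule.mk ⟨x.1, x.2⟩ 1
      map_add' := by
        intro x y
        rw [LocalizedModule.mk_add_mk]
        simp only [one_smul, one_mul]
        rfl
      map_smul' := by
        intro a x
        rw [RingHom.id_apply, hsmul, LocalizedModule.smul'_mk]
        exact congrArg (LocalizedModule.mk · 1) (Subtype.ext (by simp [Algebra.smul_def])) }
  haveI hl : IsLocalizedModule p.primeCompl g := by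
    constructor
    · -- map_units
      intro t
      have hu : IsUnit (algebraMap B (Module.End B (LocalizedModule S J))
          ((⟨algebraMap A B t.1, t.1, t.2, 0, J.zero_mem, (add_zero _).symm⟩ : S) : B)) :=
        IsLocalizedModule.map_units (LocalizedModule.mkLinearMap S J) _
      refine ⟨⟨algebraMap A (Module.End A (LocalizedModule S J)) t.1,
        { toFun := fun y => hu.unit.inv y
          map_add' := fun y z => map_add _ y z
          map_smul' := fun a y => by
            rw [RingHom.id_apply, hsmul, hsmul]
            exact map_smul (hu.unit.inv : Module.End B (LocalizedModule S J)) _ y }, ?_, ?_⟩, rfl⟩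
      · ext y
        show (t : A) • hu.unit.inv y = y
        rw [hsmul]
        have h2 := Module.End.isUnit_apply_inv_apply_of_isUnit hu y
        rwa [Module.algebraMap_end_apply] at h2
      · ext y
        show hu.unit.inv ((t : A) • y) = y
        rw [hsmul]
        have h2 := Module.End.isUnit_inv_apply_apply_of_isUnit hu y
        rwa [Module.algebraMap_end_apply] at h2
    · -- surjectivity
      intro y
      induction y using LocalizedModule.induction_on with
      | h m s =>
        have hs2 : ∃ a : A, a ∉ p ∧ ∃ j ∈ J, (s : B) = algebraMap A B a + j := s.2
        obtain ⟨a, ha, j, hj, hs⟩ := hs2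
        refine ⟨⟨⟨m.1, m.2⟩, ⟨a, ha⟩⟩, ?_⟩
        show (a : A) • LocalizedModule.mk m s = LocalizedModule.mk ⟨m.1, m.2⟩ 1
        rw [hsmul, LocalizedModule.smul'_mk]
        have : algebraMap A B a • m = s • m := by
          rw [Submonoid.smul_def, hs, hSact a j hj m]
        rw [this, LocalizedModule.mk_cancel]
    · -- injectivity
      intro x y hxy
      have h3 : ∃ c : S, c • (1 : S) • (⟨x.1, x.2⟩ : J) = c • (1 : S) • (⟨y.1, y.2⟩ : J) :=
        LocalizedModule.mk_eq.mp hxy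
      obtain ⟨c, hc⟩ := h3
      simp only [one_smul] at hc
      have hc2 : ∃ a : A, a ∉ p ∧ ∃ j ∈ J, (c : B) = algebraMap A B a + j := c.2
      obtain ⟨a, ha, j, hj, hcval⟩ := hc2
      refine ⟨⟨a, ha⟩, ?_⟩
      have h4 : algebraMap A B a • (⟨x.1, x.2⟩ : J) = algebraMap A B a • (⟨y.1, y.2⟩ : J) := by
        rw [← hSact a j hj, ← hSact a j hj, ← hcval, ← Submonoid.smul_def, ← Submonoid.smul_def,
          hc]
      ext
      have h5 := congrArg Subtype.val h4
      simpa [Submonoid.smul_def, Algebra.smul_def] using h5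
  refine Exists.intro (IsLocalizedModule.iso p.primeCompl g) ?_
  intro x t s hs
  rw [IsLocalizedModule.iso_apply_mk, Module.End.algebraMap_isUnit_inv_apply_eq_iff]
  show LocalizedModule.mk ⟨x.1, x.2⟩ 1 = (t : A) • LocalizedModule.mk x s
  rw [hsmul, LocalizedModule.smul'_mk, ← hs, ← Submonoid.smul_def, LocalizedModule.mk_cancel]
end
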